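/- For all v ≥ 1 and c = 0.9, D(v−1‖v−c) − 0.5·D(v‖v−c) < 0. -/
import Mathlib

lemma aux_log (x : ℝ) (h0 : 0 ≤ x) (h1 : x < 1) : x + x^2/2 ≤ -Real.log (1 - x) := by
  have hs := Real.hasSum_pow_div_log_of_abs_lt_one (x := x) (by rwa [abs_of_nonneg h0])
  have h := sum_le_hasSum (Finset.range 2) (fun i _ => by positivity) hs
  simpa [Finset.sum_range_succ, show (1:ℝ)+1 = 2 by norm_num] using h

noncomputable def D (x y : ℝ) : ℝ := x * Real.log (x / y) - x + y

/-- For all `v ≥ 1` and `c = 0.9`, `D(v-1 ‖ v-c) - 0.5 D(v ‖ v-c) < 0`. -/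
theorem kl_diff_negative (v : ℝ) (hv : 1 ≤ v) :
    D (v - 1) (v - 0.9) - 0.5 * D v (v - 0.9) < 0 := by
  have hv9 : (0:ℝ) < v - 0.9 := by norm_num; linarith
  have hv0 : (0:ℝ) < v := by linarith
  -- bound on first term, via `log y ≤ y - 1`
  have hA : (v - 1) * Real.log ((v - 1) / (v - 0.9)) ≤ (v - 1) * (-(0.1) / (v - 0.9)) := by
    rcases eq_or_lt_of_le hv with h | h
    · rw [← h]; norm_num
    · have h1 : (0:ℝ) < v - 1 := by linarith
      have hlog : Real.log ((v - 1) / (v - 0.9)) ≤ (v - 1) / (v - 0.9) - 1 :=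
        Real.log_le_sub_one_of_pos (by positivity)
      have heq : (v - 1) / (v - 0.9) - 1 = -(0.1) / (v - 0.9) := by
        field_simp; ring
      rw [heq] at hlog
      exact mul_le_mul_of_nonneg_left hlog (le_of_lt h1)
  -- bound on second term, via `x + x²/2 ≤ -log(1-x)` with `x = 0.9/v`
  have hx0 : (0:ℝ) ≤ 0.9 / v := by positivity
  have hx1 : 0.9 / v < 1 := by rw [div_lt_one hv0]; linarith
  have hB := aux_log (0.9 / v) hx0 hx1
  have h1x : 1 - 0.9 / v = (v - 0.9) / v := by field_simp
  have hlogeq : Real.log (v / (v - 0.9)) = -Real.log (1 - 0.9 / v) := by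
    rw [h1x, ← Real.log_inv]
    congr 1
    field_simp
  have hB2 : 0.9 / v + (0.9 / v)^2 / 2 ≤ Real.log (v / (v - 0.9)) := by
    rw [hlogeq]; exact hB
  have hB3 : v * (0.9 / v + (0.9 / v)^2 / 2) ≤ v * Real.log (v / (v - 0.9)) :=
    mul_le_mul_of_nonneg_left hB2 (le_of_lt hv0)
  unfold D
  have e1 : v * (0.9 / v + (0.9 / v)^2 / 2) = 0.9 + 0.405 / v := by
    field_simp; ring
  rw [e1] at hB3
  have key : (v - 1) * (-(0.1) / (v - 0.9)) + 0.1 - 0.5 * (0.405 / v) < 0 := by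
    have heq : (v - 1) * (-(0.1) / (v - 0.9)) + 0.1 - 0.5 * (0.405 / v)
        = (-(0.1925) * v + 0.18225) / ((v - 0.9) * v) := by
      field_simp; ring
    rw [heq]
    apply div_neg_of_neg_of_pos (by linarith) (by positivity)
  nlinarith [key, hA, hB3]
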